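/- Let c, ρ, h ∈ (0,∞) and δ ∈ ℝ. Then Σ_{n=1}^{∞} n^{2ρδ} · e^{-c·n^{ρ}·h} ≥ 4^{-ρ·δ⁻} · ∫_1^{∞} x^{2ρδ} · e^{-2^{ρ}·c·x^{ρ}·h} dx. -/

import Mathlib

open MeasureTheory Filter Set

lemma aux_summable (c ρ h : ℝ) (hc : 0 < c) (hρ : 0 < ρ) (hh : 0 < h) (p : ℝ) :
    Summable (fun n : ℕ => ((n:ℝ)+1) ^ p * Real.exp (-c * ((n:ℝ)+1) ^ ρ * h)) := by
  have hch : 0 < c * h := mul_pos hc hh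
  have T0 : Tendsto (fun y : ℝ => y ^ ((p+2)/ρ) * Real.exp (-(c*h) * y)) atTop (nhds 0) :=
    tendsto_rpow_mul_exp_neg_mul_atTop_nhds_zero _ _ hch
  have T1 : Tendsto (fun x : ℝ => (x ^ ρ) ^ ((p+2)/ρ) * Real.exp (-(c*h) * x ^ ρ))
      atTop (nhds 0) := T0.comp (tendsto_rpow_atTop hρ)
  have T : Tendsto (fun x : ℝ => x ^ (p+2) * Real.exp (-c * x ^ ρ * h)) atTop (nhds 0) := by
    apply T1.congr'
    filter_upwards [eventually_ge_atTop (0:ℝ)] with x hx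
    rw [← Real.rpow_mul hx, mul_div_cancel₀ _ hρ.ne']
    ring_nf
  have hN : Tendsto (fun n : ℕ => (n:ℝ)+1) atTop atTop :=
    tendsto_atTop_add_const_right atTop 1 tendsto_natCast_atTop_atTop
  have E : ∀ᶠ n : ℕ in atTop,
      ((n:ℝ)+1) ^ (p+2) * Real.exp (-c * ((n:ℝ)+1) ^ ρ * h) < 1 :=
    hN.eventually (T.eventually (gt_mem_nhds one_pos))
  have hO : (fun n : ℕ => ((n:ℝ)+1) ^ p * Real.exp (-c * ((n:ℝ)+1) ^ ρ * h))
      =O[atTop] (fun n : ℕ => ((n:ℝ)+1) ^ (-2:ℝ)) := by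
    apply Filter.Eventually.isBigO
    filter_upwards [E] with n hn
    have hx : (0:ℝ) < (n:ℝ)+1 := by positivity
    have h1 : ((n:ℝ)+1) ^ p = ((n:ℝ)+1) ^ (p+2) * ((n:ℝ)+1) ^ (-2:ℝ) := by
      rw [← Real.rpow_add hx]; ring_nf
    rw [Real.norm_of_nonneg (by positivity), h1]
    calc ((n:ℝ)+1) ^ (p+2) * ((n:ℝ)+1) ^ (-2:ℝ) * Real.exp (-c * ((n:ℝ)+1) ^ ρ * h)
        = (((n:ℝ)+1) ^ (p+2) * Real.exp (-c * ((n:ℝ)+1) ^ ρ * h)) * ((n:ℝ)+1) ^ (-2:ℝ) := by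
          ring
      _ ≤ 1 * ((n:ℝ)+1) ^ (-2:ℝ) := by
          apply mul_le_mul_of_nonneg_right hn.le (by positivity)
      _ = ((n:ℝ)+1) ^ (-2:ℝ) := one_mul _
  have hg : Summable (fun n : ℕ => ((n:ℝ)+1) ^ (-2:ℝ)) := by
    have := (summable_nat_add_iff 1).2 (Real.summable_nat_rpow.2 (by norm_num : (-2:ℝ) < -1))
    apply this.congr
    intro n; push_cast; ring_nf
  exact summable_of_isBigO_nat hg hO

/-- For `c, ρ, h ∈ (0,∞)` and `δ ∈ ℝ`:
`Σ_{n=1}^∞ n^{2ρδ} e^{-c n^ρ h} ≥ 4^{-ρδ⁻} ∫_1^∞ x^{2ρδ} e^{-2^ρ c x^ρ h} dx`. -/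
theorem stmt_5 (c ρ h : ℝ) (hc : 0 < c) (hρ : 0 < ρ) (hh : 0 < h) (δ : ℝ) :
    (∑' n : ℕ, ((n : ℝ) + 1) ^ (2 * ρ * δ) * Real.exp (-c * ((n : ℝ) + 1) ^ ρ * h))
      ≥ (4 : ℝ) ^ (-(ρ * max (-δ) 0))
          * ∫ x in Set.Ici (1 : ℝ),
              x ^ (2 * ρ * δ) * Real.exp (-((2 : ℝ) ^ ρ) * c * x ^ ρ * h) := by
  set p := 2 * ρ * δ with hp
  set a : ℕ → ℝ := fun n => ((n:ℝ)+1) ^ p * Real.exp (-c * ((n:ℝ)+1) ^ ρ * h) with ha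
  set f : ℝ → ℝ := fun x => x ^ (2 * ρ * δ) * Real.exp (-((2 : ℝ) ^ ρ) * c * x ^ ρ * h) with hf
  set C : ℝ := (4:ℝ) ^ (-(ρ * max (-δ) 0)) with hC
  have ha_nonneg : ∀ n, 0 ≤ a n := fun n =>
    mul_nonneg (Real.rpow_nonneg (by positivity) _) (Real.exp_nonneg _)
  have hSa : Summable a := aux_summable c ρ h hc hρ hh p
  have hC0 : 0 < C := Real.rpow_pos_of_pos (by norm_num) _
  rw [ge_iff_le]
  by_cases hint : IntegrableOn f (Set.Ici 1) volume
  swap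
  · rw [integral_undef hint, mul_zero]
    exact tsum_nonneg ha_nonneg
  set s : ℕ → Set ℝ := fun k => Set.Ico ((k:ℝ)+1) ((k:ℝ)+2) with hs
  have hsm : ∀ k, MeasurableSet (s k) := fun k => measurableSet_Ico
  have hsub : ∀ k, s k ⊆ Set.Ici (1:ℝ) := by
    intro k x hx
    have h1 : (k:ℝ)+1 ≤ x := hx.1
    have : (0:ℝ) ≤ k := Nat.cast_nonneg k
    simp only [Set.mem_Ici]; linarith
  have hsd : Pairwise (Function.onFun Disjoint s) := by
    intro i j hij
    have key : ∀ i j : ℕ, i < j → Disjoint (s i) (s j) := by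
      intro i j hlt
      apply Set.Ico_disjoint_Ico.2
      have : (i:ℝ) + 1 ≤ j := by exact_mod_cast hlt
      calc min ((i:ℝ)+2) ((j:ℝ)+2) ≤ (i:ℝ)+2 := min_le_left _ _
        _ ≤ (j:ℝ)+1 := by linarith
        _ ≤ max ((i:ℝ)+1) ((j:ℝ)+1) := le_max_right _ _
    rcases hij.lt_or_gt with hlt | hlt
    · exact key _ _ hlt
    · exact (key _ _ hlt).symm
  have hU : (⋃ k, s k) = Set.Ici (1:ℝ) := by
    apply Set.Subset.antisymm
    · exact Set.iUnion_subset hsub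
    · intro x hx
      have hx1 : (1:ℝ) ≤ x := hx
      refine Set.mem_iUnion.2 ⟨⌊x - 1⌋₊, ?_, ?_⟩
      · have := Nat.floor_le (by linarith : (0:ℝ) ≤ x - 1); linarith
      · have := Nat.lt_floor_add_one (x - 1); linarith
  -- pointwise key bound
  have key : ∀ k : ℕ, ∀ x ∈ s k, C * f x ≤ a (2*k+1) := by
    intro k x hx
    have hx1 : (k:ℝ)+1 ≤ x := hx.1
    have hx2 : x < (k:ℝ)+2 := hx.2
    have hk0 : (0:ℝ) ≤ k := Nat.cast_nonneg k
    have hxpos : (0:ℝ) < x := by linarith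
    set M : ℝ := 2*(k:ℝ)+2 with hM
    have hM0 : (0:ℝ) < M := by positivity
    have hMx : M ≤ 2*x := by linarith
    have hxM : x ≤ M := by linarith
    have haval : a (2*k+1) = M ^ p * Real.exp (-c * M ^ ρ * h) := by
      simp only [ha, hM]; push_cast; ring_nf
    rw [haval]
    have hexp : Real.exp (-((2:ℝ)^ρ) * c * x ^ ρ * h) ≤ Real.exp (-c * M ^ ρ * h) := by
      apply Real.exp_le_exp.2
      have h2x : M ^ ρ ≤ (2*x) ^ ρ :=
        Real.rpow_le_rpow hM0.le hMx hρ.le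
      have h2x' : (2*x) ^ ρ = (2:ℝ)^ρ * x ^ ρ := Real.mul_rpow (by norm_num) hxpos.le
      rw [h2x'] at h2x
      have h3 : c * M ^ ρ * h ≤ c * ((2:ℝ)^ρ * x ^ ρ) * h :=
        mul_le_mul_of_nonneg_right (mul_le_mul_of_nonneg_left h2x hc.le) hh.le
      nlinarith
    have hpow : C * x ^ p ≤ M ^ p := by
      rcases le_or_gt 0 δ with hδ | hδ
      · have hmax : max (-δ) 0 = 0 := max_eq_right (by linarith)
        have hC1 : C = 1 := by rw [hC, hmax, mul_zero, neg_zero, Real.rpow_zero]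
        rw [hC1, one_mul]
        exact Real.rpow_le_rpow hxpos.le hxM (by positivity)
      · have hmax : max (-δ) 0 = -δ := max_eq_left (by linarith)
        have hCval : C = (2:ℝ) ^ p := by
          rw [hC, hmax, hp]
          rw [show (4:ℝ) = (2:ℝ)^(2:ℝ) by
            rw [show (2:ℝ) = ((2:ℕ):ℝ) by norm_num, Real.rpow_natCast]; norm_num]
          rw [← Real.rpow_mul (by norm_num)]
          ring_nf
        rw [hCval, ← Real.mul_rpow (by norm_num) hxpos.le]
        have hple : p ≤ 0 := by
          rw [hp]; nlinarith
        exact Real.rpow_le_rpow_of_nonpos hM0 hMx hple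
    calc C * f x = (C * x ^ p) * Real.exp (-((2:ℝ)^ρ) * c * x ^ ρ * h) := by
          rw [hf]; ring
      _ ≤ M ^ p * Real.exp (-c * M ^ ρ * h) :=
          mul_le_mul hpow hexp (Real.exp_nonneg _)
            (Real.rpow_nonneg hM0.le _)
  -- integral pieces
  have hint' : IntegrableOn f (⋃ k, s k) volume := by rw [hU]; exact hint
  have hHS : HasSum (fun k => ∫ x in s k, f x) (∫ x in Set.Ici (1:ℝ), f x) := by
    rw [← hU]; exact hasSum_integral_iUnion hsm hsd hint'
  have hvol : ∀ k : ℕ, (volume (s k)).toReal = 1 := by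
    intro k
    simp only [hs, Real.volume_Ico]
    rw [show (k:ℝ)+2 - ((k:ℝ)+1) = 1 by ring]
    simp
  have piece : ∀ k : ℕ, C * ∫ x in s k, f x ≤ a (2*k+1) := by
    intro k
    have hi1 : IntegrableOn (fun x => C * f x) (s k) volume :=
      ((hint.mono_set (hsub k)).const_mul C)
    have hi2 : IntegrableOn (fun _ : ℝ => a (2*k+1)) (s k) volume := by
      exact integrableOn_const measure_Ico_lt_top.ne
    have := setIntegral_mono_on hi1 hi2 (hsm k) (key k)
    rwa [integral_const_mul, setIntegral_const, measureReal_def, hvol k, one_smul] at this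
  have hodd : Function.Injective (fun k : ℕ => 2*k+1) := by
    intro x y hxy; simp only at hxy; omega
  have hSodd : Summable (fun k => a (2*k+1)) := hSa.comp_injective hodd
  calc C * ∫ x in Set.Ici (1:ℝ), f x = ∑' k, C * ∫ x in s k, f x := by
        rw [← hHS.tsum_eq, tsum_mul_left]
    _ ≤ ∑' k, a (2*k+1) :=
        Summable.tsum_le_tsum piece (hHS.summable.mul_left C) hSodd
    _ ≤ ∑' n, a n :=
        Summable.tsum_le_tsum_of_inj _ hodd (fun n _ => ha_nonneg n) (fun k => le_rfl) hSodd hSa
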